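/- Let P and Q be n×n complex positive semidefinite matrices such that the range of P is contained in the range of Q. Then (1/4)·‖P − Q‖₁² ≤ max{Re Tr P, Re Tr Q} · ( D(P‖Q) − Re Tr(P − Q) ). -/

import Mathlib

open Matrix
open scoped ComplexOrder

/-- The matrix logarithm, applying `Real.log` (with `Real.log 0 = 0`) to the eigenvalues of a
Hermitian matrix via the continuous functional calculus (junk value on non-Hermitian input). -/
noncomputable def matLog {n : ℕ} (M : Matrix (Fin n) (Fin n) ℂ) : Matrix (Fin n) (Fin n) ℂ :=
  cfc Real.log M

/-- The quantum relative entropy `D(P‖Q) = Re Tr(P·log P) − Re Tr(P·log Q)`. -/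
noncomputable def relEnt {n : ℕ} (P Q : Matrix (Fin n) (Fin n) ℂ) : ℝ :=
  ((P * matLog P).trace).re - ((P * matLog Q).trace).re

/-- The square root `Matrix.PosSemidef.sqrt` of the older Mathlib, spelled out with its old definition. -/
noncomputable def psdSqrt {n : ℕ} {A : Matrix (Fin n) (Fin n) ℂ} (hA : A.PosSemidef) :
    Matrix (Fin n) (Fin n) ℂ :=
  hA.1.eigenvectorUnitary.1 * diagonal ((↑) ∘ (Real.sqrt ∘ hA.1.eigenvalues)) *
    (star hA.1.eigenvectorUnitary : Matrix (Fin n) (Fin n) ℂ)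

/-- The trace norm of a matrix: `‖A‖₁ = Tr √(AᴴA)`, the sum of the singular values. -/
noncomputable def traceNorm {n : ℕ} (A : Matrix (Fin n) (Fin n) ℂ) : ℝ :=
  ((psdSqrt (Matrix.posSemidef_conjTranspose_mul_self A)).trace).re

section QPAux
open ComplexConjugate

variable {n : ℕ} {A B : Matrix (Fin n) (Fin n) ℂ}

namespace QP
local notation "Mn" => Matrix (Fin n) (Fin n) ℂ

lemma unit_mul (hA : A.IsHermitian) :
    (hA.eigenvectorUnitary : Mn) * (star hA.eigenvectorUnitary : Mn) = 1 :=
  Unitary.mul_star_self_of_mem hA.eigenvectorUnitary.2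

lemma unit_mul' (hA : A.IsHermitian) :
    (star hA.eigenvectorUnitary : Mn) * (hA.eigenvectorUnitary : Mn) = 1 :=
  Unitary.star_mul_self_of_mem hA.eigenvectorUnitary.2

lemma cfc_mul_cfc (hA : A.IsHermitian) (f g : ℝ → ℝ) :
    hA.cfc f * hA.cfc g = hA.cfc (fun x => f x * g x) := by
  unfold Matrix.IsHermitian.cfc
  simp only [Unitary.conjStarAlgAut_apply]
  simp only [mul_assoc]
  rw [← mul_assoc (star (hA.eigenvectorUnitary : Mn)) (hA.eigenvectorUnitary : Mn), unit_mul' hA,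
    one_mul, ← mul_assoc (diagonal _) (diagonal _), diagonal_mul_diagonal]
  congr 1
  ext i
  simp [Function.comp]

lemma cfc_id (hA : A.IsHermitian) : hA.cfc (fun x => x) = A := by
  unfold Matrix.IsHermitian.cfc
  exact hA.spectral_theorem.symm

lemma cfc_one (hA : A.IsHermitian) : hA.cfc (fun _ => 1) = 1 := by
  unfold Matrix.IsHermitian.cfc
  simp only [Unitary.conjStarAlgAut_apply]
  have : diagonal (RCLike.ofReal ∘ (fun _ => (1:ℝ)) ∘ hA.eigenvalues) = (1 : Mn) := by
    rw [show (RCLike.ofReal ∘ (fun _ => (1:ℝ)) ∘ hA.eigenvalues) = fun _ : Fin n => (1:ℂ) from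
      funext fun i => by simp, diagonal_one]
  rw [this, mul_one, unit_mul hA]

lemma cfc_isHermitian (hA : A.IsHermitian) (f : ℝ → ℝ) : (hA.cfc f).IsHermitian := by
  unfold Matrix.IsHermitian.cfc
  simp only [Unitary.conjStarAlgAut_apply]
  unfold Matrix.IsHermitian
  rw [conjTranspose_mul, conjTranspose_mul, diagonal_conjTranspose, ← star_eq_conjTranspose,
    ← star_eq_conjTranspose, star_star, mul_assoc]
  congr 1
  ext i
  simp [Function.comp, Pi.star_def]

lemma cfc_posSemidef (hA : A.IsHermitian) {f : ℝ → ℝ}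
    (hf : ∀ i, 0 ≤ f (hA.eigenvalues i)) : (hA.cfc f).PosSemidef := by
  unfold Matrix.IsHermitian.cfc
  simp only [Unitary.conjStarAlgAut_apply]
  rw [star_eq_conjTranspose]
  refine PosSemidef.mul_mul_conjTranspose_same ?_ _
  refine posSemidef_diagonal_iff.mpr fun i => ?_
  simp only [Function.comp_apply]
  exact Complex.zero_le_real.mpr (hf i)

lemma trace_cfc (hA : A.IsHermitian) (f : ℝ → ℝ) :
    (hA.cfc f).trace = ((∑ i, f (hA.eigenvalues i) : ℝ) : ℂ) := by
  unfold Matrix.IsHermitian.cfc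
  simp only [Unitary.conjStarAlgAut_apply]
  rw [trace_mul_cycle, unit_mul' hA, one_mul, trace_diagonal]
  push_cast
  rfl


/-- The unitary change-of-basis between eigenbases of `A` and `B`. -/
noncomputable def Wm (hA : A.IsHermitian) (hB : B.IsHermitian) : Mn :=
  (star hA.eigenvectorUnitary : Mn) * (hB.eigenvectorUnitary : Mn)

lemma star_Wm (hA : A.IsHermitian) (hB : B.IsHermitian) :
    star (Wm hA hB) = (star hB.eigenvectorUnitary : Mn) * (hA.eigenvectorUnitary : Mn) := by
  rw [Wm, Matrix.star_mul, star_star]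

lemma Wm_mul_star (hA : A.IsHermitian) (hB : B.IsHermitian) :
    Wm hA hB * star (Wm hA hB) = 1 := by
  rw [star_Wm, Wm, mul_assoc, ← mul_assoc (hB.eigenvectorUnitary : Mn), unit_mul hB, one_mul,
    unit_mul' hA]

lemma star_Wm_mul (hA : A.IsHermitian) (hB : B.IsHermitian) :
    star (Wm hA hB) * Wm hA hB = 1 := by
  rw [star_Wm, Wm, mul_assoc, ← mul_assoc (hA.eigenvectorUnitary : Mn), unit_mul hA, one_mul,
    unit_mul' hB]

lemma sum_c_row (hA : A.IsHermitian) (hB : B.IsHermitian) (i : Fin n) :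
    ∑ j, Complex.normSq (Wm hA hB i j) = 1 := by
  have h := congrFun (congrFun (Wm_mul_star hA hB) i) i
  rw [mul_apply, one_apply_eq] at h
  have h2 : (((∑ j, Complex.normSq (Wm hA hB i j) : ℝ)) : ℂ) = 1 := by
    rw [← h]
    push_cast
    refine Finset.sum_congr rfl fun j _ => ?_
    rw [star_apply, show star (Wm hA hB i j) = conj (Wm hA hB i j) from rfl, Complex.mul_conj]
  exact_mod_cast h2

lemma sum_c_col (hA : A.IsHermitian) (hB : B.IsHermitian) (j : Fin n) :
    ∑ i, Complex.normSq (Wm hA hB i j) = 1 := by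
  have h := congrFun (congrFun (star_Wm_mul hA hB) j) j
  rw [mul_apply, one_apply_eq] at h
  have h2 : (((∑ i, Complex.normSq (Wm hA hB i j) : ℝ)) : ℂ) = 1 := by
    rw [← h]
    push_cast
    refine Finset.sum_congr rfl fun i _ => ?_
    rw [star_apply, show star (Wm hA hB i j) = conj (Wm hA hB i j) from rfl, mul_comm,
      Complex.mul_conj]
  exact_mod_cast h2

lemma trace_conj_unitary (hA : A.IsHermitian) (Z : Mn) :
    ((hA.eigenvectorUnitary : Mn) * Z * (star hA.eigenvectorUnitary : Mn)).trace = Z.trace := by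
  rw [trace_mul_cycle, unit_mul' hA, one_mul]

lemma trace_cfc_mul_cfc (hA : A.IsHermitian) (hB : B.IsHermitian) (f g : ℝ → ℝ) :
    ((hA.cfc f) * (hB.cfc g)).trace
      = ((∑ i, ∑ j, f (hA.eigenvalues i) * g (hB.eigenvalues j)
          * Complex.normSq (Wm hA hB i j) : ℝ) : ℂ) := by
  have key : hA.cfc f * hB.cfc g
      = (hA.eigenvectorUnitary : Mn)
        * (diagonal (RCLike.ofReal ∘ f ∘ hA.eigenvalues) * Wm hA hB
            * diagonal (RCLike.ofReal ∘ g ∘ hB.eigenvalues) * star (Wm hA hB))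
        * (star hA.eigenvectorUnitary : Mn) := by
    rw [star_Wm, Wm]
    unfold Matrix.IsHermitian.cfc
    simp only [Unitary.conjStarAlgAut_apply]
    simp only [mul_assoc]
    rw [unit_mul hA, mul_one]
  rw [key, trace_conj_unitary]
  rw [Matrix.trace]
  push_cast
  rw [Finset.sum_congr rfl (fun i (_ : i ∈ Finset.univ) => ?_)]
  rw [diag_apply, mul_assoc (diagonal _ * Wm hA hB), mul_apply]
  refine Finset.sum_congr rfl fun j _ => ?_
  rw [diagonal_mul, diagonal_mul, star_apply,
    show star (Wm hA hB i j) = conj (Wm hA hB i j) from rfl]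
  simp only [Function.comp_apply, show (RCLike.ofReal : ℝ → ℂ) = Complex.ofReal from rfl,
    ← Complex.mul_conj]
  ring


lemma trace_conjTranspose_mul_self_re (X : Mn) :
    ((Xᴴ * X).trace).re = ∑ j, ∑ i, Complex.normSq (X i j) := by
  rw [Matrix.trace, Complex.re_sum]
  refine Finset.sum_congr rfl fun j _ => ?_
  rw [diag_apply, mul_apply, Complex.re_sum]
  refine Finset.sum_congr rfl fun i _ => ?_
  rw [conjTranspose_apply, show star (X i j) = conj (X i j) from rfl, mul_comm, Complex.mul_conj,
    Complex.ofReal_re]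

lemma psd_trace_re_nonneg {X : Mn} (hX : X.PosSemidef) : 0 ≤ (X.trace).re := by
  simpa using (Complex.le_def.mp hX.trace_nonneg).1

lemma psdSqrt_eq {X : Mn} (hX : X.PosSemidef) : psdSqrt hX = hX.1.cfc Real.sqrt := by
  unfold psdSqrt Matrix.IsHermitian.cfc
  rfl

/-- The square root of a positive semidefinite matrix (the old `Matrix.PosSemidef.sqrt`). -/
noncomputable def _root_.Matrix.PosSemidef.sqrt {X : Mn} (hX : X.PosSemidef) : Mn := psdSqrt hX

lemma _root_.Matrix.PosSemidef.sqrt_mul_self {X : Mn} (hX : X.PosSemidef) :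
    hX.sqrt * hX.sqrt = X := by
  unfold Matrix.PosSemidef.sqrt
  rw [psdSqrt_eq, cfc_mul_cfc]
  conv_rhs => rw [← cfc_id hX.1]
  unfold Matrix.IsHermitian.cfc
  congr 2
  funext i
  simp only [Function.comp_apply]
  rw [Real.mul_self_sqrt (hX.eigenvalues_nonneg i)]

lemma _root_.Matrix.PosSemidef.posSemidef_sqrt {X : Mn} (hX : X.PosSemidef) :
    hX.sqrt.PosSemidef := by
  unfold Matrix.PosSemidef.sqrt
  rw [psdSqrt_eq]
  exact cfc_posSemidef hX.1 fun i => Real.sqrt_nonneg _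

lemma trace_mul_re_nonneg {X Y : Mn} (hX : X.PosSemidef) (hY : Y.PosSemidef) :
    0 ≤ ((X * Y).trace).re := by
  have h1 : (X * Y).trace = (hX.sqrt * (Y * hX.sqrt)).trace := by
    conv_lhs => rw [show X = hX.sqrt * hX.sqrt from (hX.sqrt_mul_self).symm]
    rw [mul_assoc, trace_mul_comm, mul_assoc]
  have h2 : (hX.sqrt * (Y * hX.sqrt)).PosSemidef := by
    have := hY.mul_mul_conjTranspose_same hX.sqrt
    rwa [hX.posSemidef_sqrt.1.eq, mul_assoc] at this
  rw [h1]
  exact psd_trace_re_nonneg h2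

lemma abs_trace_conjTranspose_mul_le (X Y : Mn) :
    ‖(Xᴴ * Y).trace‖
      ≤ Real.sqrt (((Xᴴ * X).trace).re) * Real.sqrt (((Yᴴ * Y).trace).re) := by
  set S : ℝ := ∑ p : Fin n × Fin n, ‖X p.1 p.2‖ * ‖Y p.1 p.2‖ with hS
  have hSnn : 0 ≤ S := Finset.sum_nonneg fun p _ => by positivity
  have habs : ‖(Xᴴ * Y).trace‖ ≤ S := by
    rw [hS, Fintype.sum_prod_type, Finset.sum_comm, Matrix.trace]
    refine (norm_sum_le _ _).trans (Finset.sum_le_sum fun j _ => ?_)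
    rw [diag_apply, mul_apply]
    refine (norm_sum_le _ _).trans (Finset.sum_le_sum fun i _ => ?_)
    rw [conjTranspose_apply, norm_mul, show star (X i j) = conj (X i j) from rfl,
      Complex.norm_conj]
  have hXX : ((Xᴴ * X).trace).re = ∑ p : Fin n × Fin n, ‖X p.1 p.2‖ ^ 2 := by
    rw [trace_conjTranspose_mul_self_re, Fintype.sum_prod_type, Finset.sum_comm]
    simp [Complex.sq_norm]
  have hYY : ((Yᴴ * Y).trace).re = ∑ p : Fin n × Fin n, ‖Y p.1 p.2‖ ^ 2 := by
    rw [trace_conjTranspose_mul_self_re, Fintype.sum_prod_type, Finset.sum_comm]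
    simp [Complex.sq_norm]
  have hcs := Finset.sum_mul_sq_le_sq_mul_sq Finset.univ
    (fun p : Fin n × Fin n => ‖X p.1 p.2‖)
    (fun p : Fin n × Fin n => ‖Y p.1 p.2‖)
  refine habs.trans ?_
  have h1 : S = Real.sqrt (S ^ 2) := (Real.sqrt_sq hSnn).symm
  rw [h1, hXX, hYY, ← Real.sqrt_mul (by positivity)]
  exact Real.sqrt_le_sqrt hcs


lemma conj_entry_eq (hA : A.IsHermitian) (hB : B.IsHermitian) (j : Fin n) :
    ((star hB.eigenvectorUnitary : Mn) * A * (hB.eigenvectorUnitary : Mn)) j j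
      = ((∑ i, hA.eigenvalues i * Complex.normSq (Wm hA hB i j) : ℝ) : ℂ) := by
  have key : (star hB.eigenvectorUnitary : Mn) * A * (hB.eigenvectorUnitary : Mn)
      = star (Wm hA hB) * diagonal (RCLike.ofReal ∘ hA.eigenvalues) * Wm hA hB := by
    rw [star_Wm, Wm]
    conv_lhs => rw [hA.spectral_theorem, Unitary.conjStarAlgAut_apply]
    simp only [mul_assoc]
  rw [key, mul_assoc, mul_apply]
  push_cast
  refine Finset.sum_congr rfl fun i _ => ?_
  rw [diagonal_mul, star_apply, show star (Wm hA hB i j) = conj (Wm hA hB i j) from rfl]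
  simp only [Function.comp_apply, show (RCLike.ofReal : ℝ → ℂ) = Complex.ofReal from rfl,
    ← Complex.mul_conj]
  ring

lemma dot_eq_conj_entry (hB : B.IsHermitian) (X : Mn) (j : Fin n) :
    star (⇑(hB.eigenvectorBasis j)) ⬝ᵥ (X *ᵥ ⇑(hB.eigenvectorBasis j))
      = ((star hB.eigenvectorUnitary : Mn) * X * (hB.eigenvectorUnitary : Mn)) j j := by
  rw [mul_assoc, mul_apply]
  simp only [dotProduct, mulVec, star_apply, Pi.star_apply, mul_apply,
    Matrix.IsHermitian.eigenvectorUnitary_apply, Finset.mul_sum]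

lemma range_kill {P Q : Mn} (hP : P.PosSemidef) (hQ : Q.PosSemidef)
    (hrange : LinearMap.range P.mulVecLin ≤ LinearMap.range Q.mulVecLin)
    {j : Fin n} (hbj : hQ.1.eigenvalues j = 0) (i : Fin n) :
    hP.1.eigenvalues i * Complex.normSq (Wm hP.1 hQ.1 i j) = 0 := by
  set v : Fin n → ℂ := ⇑(hQ.1.eigenvectorBasis j) with hv
  have hQv : Q *ᵥ v = 0 := by
    rw [hv, hQ.1.mulVec_eigenvectorBasis, hbj]
    simp
  have hPv : P *ᵥ v ∈ LinearMap.range Q.mulVecLin := hrange ⟨v, rfl⟩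
  obtain ⟨y, hy⟩ := hPv
  have hdot : star v ⬝ᵥ (P *ᵥ v) = 0 := by
    rw [← hy, mulVecLin_apply, dotProduct_mulVec]
    have : star v ᵥ* Q = 0 := by
      have h1 : star v ᵥ* Qᴴ = 0 := by rw [← star_mulVec, hQv, star_zero]
      rwa [hQ.1.eq] at h1
    rw [this, zero_dotProduct]
  have hsum : ((∑ i, hP.1.eigenvalues i * Complex.normSq (Wm hP.1 hQ.1 i j) : ℝ) : ℂ) = 0 := by
    rw [← conj_entry_eq hP.1 hQ.1 j, ← dot_eq_conj_entry hQ.1 P j, ← hv, hdot]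
  have hsum' : (∑ i, hP.1.eigenvalues i * Complex.normSq (Wm hP.1 hQ.1 i j) : ℝ) = 0 := by
    exact_mod_cast hsum
  have hterm : ∀ i ∈ Finset.univ, 0 ≤ hP.1.eigenvalues i * Complex.normSq (Wm hP.1 hQ.1 i j) :=
    fun i _ => mul_nonneg (hP.eigenvalues_nonneg i) (Complex.normSq_nonneg _)
  exact (Finset.sum_eq_zero_iff_of_nonneg hterm).mp hsum' i (Finset.mem_univ i)


lemma cfc_sub (hA : A.IsHermitian) (f g : ℝ → ℝ) :
    hA.cfc f - hA.cfc g = hA.cfc (fun x => f x - g x) := by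
  unfold Matrix.IsHermitian.cfc
  simp only [Unitary.conjStarAlgAut_apply]
  rw [← sub_mul, ← mul_sub]
  congr 2
  rw [diagonal_sub]
  refine congrArg diagonal ?_
  funext i
  simp [Function.comp]

lemma sign_facts (x : ℝ) : Real.sign x * x = |x| ∧ 0 ≤ 1 - Real.sign x * Real.sign x := by
  rcases lt_trichotomy x 0 with h | h | h
  · rw [Real.sign_of_neg h, abs_of_neg h]; norm_num
  · subst h; simp [Real.sign_zero]
  · rw [Real.sign_of_pos h, abs_of_pos h]; norm_num

lemma scalar_key {w x y : ℝ} (hw : 0 ≤ w) (hx : 0 ≤ x) (hy : 0 ≤ y) (hxy : y = 0 → x * w = 0) :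
    w * x + w * y - 2 * (Real.sqrt x * Real.sqrt y * w)
      ≤ x * Real.log x * w - x * Real.log y * w - x * w + y * w := by
  rcases eq_or_lt_of_le hw with hw0 | hw0
  · rw [← hw0]; ring_nf; exact le_rfl
  rcases eq_or_lt_of_le hx with hx0 | hx0
  · rw [← hx0]; simp [Real.sqrt_zero]; ring_nf; exact le_rfl
  rcases eq_or_lt_of_le hy with hy0 | hy0
  · exfalso
    have := hxy hy0.symm
    rcases mul_eq_zero.mp this with h | h
    · exact hx0.ne h.symm
    · exact hw0.ne h.symm
  -- now x > 0, y > 0, w > 0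
  have hsx : 0 < Real.sqrt x := Real.sqrt_pos.mpr hx0
  have hsy : 0 < Real.sqrt y := Real.sqrt_pos.mpr hy0
  have h1 : Real.log (Real.sqrt y / Real.sqrt x) ≤ Real.sqrt y / Real.sqrt x - 1 :=
    Real.log_le_sub_one_of_pos (by positivity)
  have h2 : Real.log (Real.sqrt y / Real.sqrt x) = Real.log y / 2 - Real.log x / 2 := by
    rw [Real.log_div hsy.ne' hsx.ne', Real.log_sqrt hy, Real.log_sqrt hx]
  have h3 : Real.sqrt x * Real.sqrt x = x := Real.mul_self_sqrt hx
  have h4 : x * (Real.sqrt y / Real.sqrt x) = Real.sqrt x * Real.sqrt y := by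
    field_simp
    nlinarith [h3]
  have h5 := mul_le_mul_of_nonneg_left (h2 ▸ h1) hx0.le
  have h6 : x * Real.log y - x * Real.log x ≤ 2 * (Real.sqrt x * Real.sqrt y) - 2 * x := by
    nlinarith [h5, h4]
  nlinarith [mul_le_mul_of_nonneg_right h6 hw0.le]

end QP

end QPAux

set_option maxHeartbeats 2000000 in
/-- **Generalized quantum Pinsker inequality** (Theorem 2 of the paper): for positive
semidefinite matrices `P, Q` with `range P ⊆ range Q`,
`(1/4)·‖P − Q‖₁² ≤ max{Tr P, Tr Q} · (D(P‖Q) − Tr(P − Q))`. -/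
theorem stmt1 {n : ℕ} (P Q : Matrix (Fin n) (Fin n) ℂ)
    (hP : P.PosSemidef) (hQ : Q.PosSemidef)
    (hrange : LinearMap.range P.mulVecLin ≤ LinearMap.range Q.mulVecLin) :
    (1 / 4) * traceNorm (P - Q) ^ 2
      ≤ max ((P.trace).re) ((Q.trace).re) * (relEnt P Q - ((P - Q).trace).re) := by
  classical
  set a : Fin n → ℝ := hP.1.eigenvalues with ha_def
  set b : Fin n → ℝ := hQ.1.eigenvalues with hb_def
  set c : Fin n → Fin n → ℝ := fun i j => Complex.normSq (QP.Wm hP.1 hQ.1 i j) with hc_def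
  have ha : ∀ i, 0 ≤ a i := hP.eigenvalues_nonneg
  have hb : ∀ j, 0 ≤ b j := hQ.eigenvalues_nonneg
  have hc : ∀ i j, 0 ≤ c i j := fun i j => Complex.normSq_nonneg _
  have hrow : ∀ i, ∑ j, c i j = 1 := QP.sum_c_row hP.1 hQ.1
  have hcol : ∀ j, ∑ i, c i j = 1 := QP.sum_c_col hP.1 hQ.1
  have hkill : ∀ j, b j = 0 → ∀ i, a i * c i j = 0 := fun j hj i =>
    QP.range_kill hP hQ hrange hj i
  -- trace identities
  have htrP : (P.trace).re = ∑ i, a i := by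
    have h : (hP.1.cfc (fun x => x)).trace = P.trace := by rw [QP.cfc_id hP.1]
    rw [← h, QP.trace_cfc, Complex.ofReal_re]
  have htrQ : (Q.trace).re = ∑ j, b j := by
    have h : (hQ.1.cfc (fun x => x)).trace = Q.trace := by rw [QP.cfc_id hQ.1]
    rw [← h, QP.trace_cfc, Complex.ofReal_re]
  have htrD : (((P - Q)).trace).re = (∑ i, a i) - ∑ j, b j := by
    rw [trace_sub, Complex.sub_re, htrP, htrQ]
  have hPlogP : ((P * matLog P).trace).re = ∑ i, a i * Real.log (a i) := by
    have h1 : P * matLog P = hP.1.cfc (fun x => x * Real.log x) := by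
      rw [matLog, hP.1.cfc_eq]
      have h : hP.1.cfc (fun x => x) * hP.1.cfc Real.log = P * hP.1.cfc Real.log := by
        rw [QP.cfc_id hP.1]
      rw [← h, QP.cfc_mul_cfc]
    rw [h1, QP.trace_cfc, Complex.ofReal_re]
  have hPlogQ : ((P * matLog Q).trace).re
      = ∑ i, ∑ j, a i * Real.log (b j) * c i j := by
    have h1 : P * matLog Q = hP.1.cfc (fun x => x) * hQ.1.cfc Real.log := by
      rw [matLog, hQ.1.cfc_eq, QP.cfc_id hP.1]
    rw [h1, QP.trace_cfc_mul_cfc, Complex.ofReal_re]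
  -- sqrt matrices
  have hsp : hP.sqrt = hP.1.cfc Real.sqrt := rfl
  have hsq : hQ.sqrt = hQ.1.cfc Real.sqrt := rfl
  have hspq : ((hP.sqrt * hQ.sqrt).trace).re
      = ∑ i, ∑ j, Real.sqrt (a i) * Real.sqrt (b j) * c i j := by
    rw [hsp, hsq, QP.trace_cfc_mul_cfc, Complex.ofReal_re]
  set Am : Matrix (Fin n) (Fin n) ℂ := hP.sqrt - hQ.sqrt with hAm_def
  set Bm : Matrix (Fin n) (Fin n) ℂ := hP.sqrt + hQ.sqrt with hBm_def
  have hAm : Am.IsHermitian := hP.posSemidef_sqrt.1.sub hQ.posSemidef_sqrt.1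
  have hBm : Bm.IsHermitian := hP.posSemidef_sqrt.1.add hQ.posSemidef_sqrt.1
  have hABBA : Am * Bm + Bm * Am = (P - Q) + (P - Q) := by
    have h1 : Am * Bm + Bm * Am
        = (hP.sqrt * hP.sqrt - hQ.sqrt * hQ.sqrt) + (hP.sqrt * hP.sqrt - hQ.sqrt * hQ.sqrt) := by
      rw [hAm_def, hBm_def]; noncomm_ring
    rw [h1, hP.sqrt_mul_self, hQ.sqrt_mul_self]
  set H : ℝ := ∑ i, ∑ j, Real.sqrt (a i) * Real.sqrt (b j) * c i j with hH_def
  have htA : ((Am * Am).trace).re = ((∑ i, a i) + ∑ j, b j) - 2 * H := by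
    have h1 : Am * Am = hP.sqrt * hP.sqrt + hQ.sqrt * hQ.sqrt
        - (hP.sqrt * hQ.sqrt + hQ.sqrt * hP.sqrt) := by
      rw [hAm_def]; noncomm_ring
    rw [h1, hP.sqrt_mul_self, hQ.sqrt_mul_self, trace_sub, trace_add, trace_add,
      trace_mul_comm hQ.sqrt hP.sqrt, Complex.sub_re, Complex.add_re, Complex.add_re,
      htrP, htrQ, hspq]
    ring
  have htB : ((Bm * Bm).trace).re = ((∑ i, a i) + ∑ j, b j) + 2 * H := by
    have h1 : Bm * Bm = hP.sqrt * hP.sqrt + hQ.sqrt * hQ.sqrt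
        + (hP.sqrt * hQ.sqrt + hQ.sqrt * hP.sqrt) := by
      rw [hBm_def]; noncomm_ring
    rw [h1, hP.sqrt_mul_self, hQ.sqrt_mul_self, trace_add, trace_add, trace_add,
      trace_mul_comm hQ.sqrt hP.sqrt, Complex.add_re, Complex.add_re, Complex.add_re,
      htrP, htrQ, hspq]
    ring
  set tA : ℝ := ((Am * Am).trace).re with htA_def
  set tB : ℝ := ((Bm * Bm).trace).re with htB_def
  have hAmPSD : (Am * Am).PosSemidef := by
    have h := posSemidef_conjTranspose_mul_self Am
    rwa [hAm.eq] at h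
  have hBmPSD : (Bm * Bm).PosSemidef := by
    have h := posSemidef_conjTranspose_mul_self Bm
    rwa [hBm.eq] at h
  have htAnn : 0 ≤ tA := QP.psd_trace_re_nonneg hAmPSD
  have htBnn : 0 ≤ tB := QP.psd_trace_re_nonneg hBmPSD
  -- the sign matrix and trace norm
  have hD : (P - Q).IsHermitian := hP.1.sub hQ.1
  set S : Matrix (Fin n) (Fin n) ℂ := hD.cfc Real.sign with hS_def
  have hS : S.IsHermitian := QP.cfc_isHermitian hD Real.sign
  have hXeq : psdSqrt (Matrix.posSemidef_conjTranspose_mul_self (P - Q))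
      = hD.cfc (fun x => |x|) := by
    rw [QP.psdSqrt_eq, ← Matrix.IsHermitian.cfc_eq, ← Matrix.IsHermitian.cfc_eq, hD.eq]
    have h1 := cfc_mul (fun x : ℝ => x) (fun x : ℝ => x) (P - Q)
    rw [cfc_id' ℝ (P - Q) hD.isSelfAdjoint] at h1
    rw [← h1, ← cfc_comp Real.sqrt (fun x : ℝ => x * x) (P - Q) hD.isSelfAdjoint]
    exact cfc_congr fun x _ => by simp [Real.sqrt_mul_self_eq_abs]
  have htraceNorm : traceNorm (P - Q) = ∑ k, |hD.eigenvalues k| := by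
    rw [traceNorm, hXeq, QP.trace_cfc, Complex.ofReal_re]
  set T : ℝ := traceNorm (P - Q) with hT_def
  have hT0 : 0 ≤ T := by
    rw [htraceNorm]
    exact Finset.sum_nonneg fun k _ => abs_nonneg _
  have hSD : S * (P - Q) = hD.cfc (fun x => |x|) := by
    have h1 : S * (P - Q) = hD.cfc Real.sign * hD.cfc (fun x => x) := by
      rw [QP.cfc_id hD, hS_def]
    rw [h1, QP.cfc_mul_cfc]
    exact congrArg hD.cfc (funext fun x => (QP.sign_facts x).1)
  have hTS : ((S * (P - Q)).trace).re = T := by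
    rw [hSD, QP.trace_cfc, Complex.ofReal_re, htraceNorm]
  -- Cauchy-Schwarz bounds
  have hSSle : ∀ (C : Matrix (Fin n) (Fin n) ℂ), C.IsHermitian → (C * C).PosSemidef →
      (((C * S)ᴴ * (C * S)).trace).re ≤ ((C * C).trace).re := by
    intro C hC hCC
    have h1 : (C * S)ᴴ * (C * S) = S * (C * C) * S := by
      rw [conjTranspose_mul, hS.eq, hC.eq]; noncomm_ring
    have h2 : (S * (C * C) * S).trace = (S * S * (C * C)).trace := by
      rw [trace_mul_cycle]
    have h3 : (1 : Matrix (Fin n) (Fin n) ℂ) - S * S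
        = hD.cfc (fun x => 1 - Real.sign x * Real.sign x) := by
      rw [hS_def, QP.cfc_mul_cfc, ← QP.cfc_sub hD, QP.cfc_one hD]
    have h4 : 0 ≤ ((((1 : Matrix (Fin n) (Fin n) ℂ) - S * S) * (C * C)).trace).re := by
      rw [h3]
      exact QP.trace_mul_re_nonneg (QP.cfc_posSemidef hD fun i => (QP.sign_facts _).2) hCC
    have h5 : (((1 : Matrix (Fin n) (Fin n) ℂ) - S * S) * (C * C)).trace
        = (C * C).trace - (S * S * (C * C)).trace := by
      rw [sub_mul, one_mul, trace_sub]
    rw [h5, Complex.sub_re] at h4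
    rw [h1, h2]
    linarith
  have hSSnn : ∀ (C : Matrix (Fin n) (Fin n) ℂ),
      0 ≤ (((C * S)ᴴ * (C * S)).trace).re := fun C =>
    QP.psd_trace_re_nonneg (posSemidef_conjTranspose_mul_self _)
  have hcs1 : ((S * (Am * Bm)).trace).re ≤ Real.sqrt tA * Real.sqrt tB := by
    have e1 : S * (Am * Bm) = (Am * S)ᴴ * Bm := by
      rw [conjTranspose_mul, hS.eq, hAm.eq, mul_assoc]
    rw [e1]
    refine le_trans (Complex.re_le_norm _) ?_
    refine le_trans (QP.abs_trace_conjTranspose_mul_le _ _) ?_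
    have hb1 : Real.sqrt ((((Am * S)ᴴ * (Am * S)).trace).re) ≤ Real.sqrt tA :=
      Real.sqrt_le_sqrt (hSSle Am hAm hAmPSD)
    have hb2 : Real.sqrt (((Bmᴴ * Bm).trace).re) = Real.sqrt tB := by rw [hBm.eq]
    rw [hb2]
    exact mul_le_mul_of_nonneg_right hb1 (Real.sqrt_nonneg _)
  have hcs2 : ((S * (Bm * Am)).trace).re ≤ Real.sqrt tA * Real.sqrt tB := by
    have e1 : S * (Bm * Am) = (Bm * S)ᴴ * Am := by
      rw [conjTranspose_mul, hS.eq, hBm.eq, mul_assoc]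
    rw [e1]
    refine le_trans (Complex.re_le_norm _) ?_
    refine le_trans (QP.abs_trace_conjTranspose_mul_le _ _) ?_
    have hb1 : Real.sqrt ((((Bm * S)ᴴ * (Bm * S)).trace).re) ≤ Real.sqrt tB :=
      Real.sqrt_le_sqrt (hSSle Bm hBm hBmPSD)
    have hb2 : Real.sqrt (((Amᴴ * Am).trace).re) = Real.sqrt tA := by rw [hAm.eq]
    rw [hb2]
    calc Real.sqrt ((((Bm * S)ᴴ * (Bm * S)).trace).re) * Real.sqrt tA
        ≤ Real.sqrt tB * Real.sqrt tA := mul_le_mul_of_nonneg_right hb1 (Real.sqrt_nonneg _)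
      _ = Real.sqrt tA * Real.sqrt tB := mul_comm _ _
  have h2T : T + T ≤ Real.sqrt tA * Real.sqrt tB + Real.sqrt tA * Real.sqrt tB := by
    have hsum : (S * (Am * Bm)).trace + (S * (Bm * Am)).trace
        = (S * (P - Q)).trace + (S * (P - Q)).trace := by
      rw [← trace_add, ← trace_add, ← mul_add, ← mul_add, hABBA]
    have hre := congrArg Complex.re hsum
    rw [Complex.add_re, Complex.add_re, hTS] at hre
    linarith [hcs1, hcs2]
  have hTle : T ≤ Real.sqrt tA * Real.sqrt tB := by linarith
  -- the entropy bound
  have hca : ∑ i, ∑ j, c i j * a i = ∑ i, a i := by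
    refine Finset.sum_congr rfl fun i _ => ?_
    rw [← Finset.sum_mul, hrow i, one_mul]
  have hcb : ∑ i, ∑ j, c i j * b j = ∑ j, b j := by
    rw [Finset.sum_comm]
    refine Finset.sum_congr rfl fun j _ => ?_
    rw [← Finset.sum_mul, hcol j, one_mul]
  have hac : ∑ i, ∑ j, a i * c i j = ∑ i, a i := by
    refine Finset.sum_congr rfl fun i _ => ?_
    rw [← Finset.mul_sum, hrow i, mul_one]
  have hbc : ∑ i, ∑ j, b j * c i j = ∑ j, b j := by
    rw [Finset.sum_comm]
    refine Finset.sum_congr rfl fun j _ => ?_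
    rw [← Finset.mul_sum, hcol j, mul_one]
  have halogac : ∑ i, ∑ j, a i * Real.log (a i) * c i j = ∑ i, a i * Real.log (a i) := by
    refine Finset.sum_congr rfl fun i _ => ?_
    rw [← Finset.mul_sum, hrow i, mul_one]
  have hK : tA ≤ relEnt P Q - ((P - Q).trace).re := by
    have hterm : ∀ i j, c i j * a i + c i j * b j
        - 2 * (Real.sqrt (a i) * Real.sqrt (b j) * c i j)
        ≤ a i * Real.log (a i) * c i j - a i * Real.log (b j) * c i j
          - a i * c i j + b j * c i j := fun i j =>
      QP.scalar_key (hc i j) (ha i) (hb j) (fun h => hkill j h i)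
    have hsum : ∑ i, ∑ j, (c i j * a i + c i j * b j
          - 2 * (Real.sqrt (a i) * Real.sqrt (b j) * c i j))
        ≤ ∑ i, ∑ j, (a i * Real.log (a i) * c i j - a i * Real.log (b j) * c i j
          - a i * c i j + b j * c i j) :=
      Finset.sum_le_sum fun i _ => Finset.sum_le_sum fun j _ => hterm i j
    have hL : ∑ i, ∑ j, (c i j * a i + c i j * b j
          - 2 * (Real.sqrt (a i) * Real.sqrt (b j) * c i j))
        = ((∑ i, a i) + ∑ j, b j) - 2 * H := by
      simp only [Finset.sum_sub_distrib, Finset.sum_add_distrib, ← Finset.mul_sum]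
      rw [hca, hcb, hH_def]
    have hR : ∑ i, ∑ j, (a i * Real.log (a i) * c i j - a i * Real.log (b j) * c i j
          - a i * c i j + b j * c i j)
        = (∑ i, a i * Real.log (a i)) - (∑ i, ∑ j, a i * Real.log (b j) * c i j)
          - (∑ i, a i) + ∑ j, b j := by
      simp only [Finset.sum_sub_distrib, Finset.sum_add_distrib]
      rw [halogac, hac, hbc]
    rw [hL, hR] at hsum
    rw [relEnt, hPlogP, hPlogQ, htrD, htA]
    linarith
  -- max bounds
  set m : ℝ := max ((P.trace).re) ((Q.trace).re) with hm_def
  have hmP : ∑ i, a i ≤ m := by rw [← htrP]; exact le_max_left _ _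
  have hmQ : ∑ j, b j ≤ m := by rw [← htrQ]; exact le_max_right _ _
  have htB4 : tB ≤ 4 * m := by
    have h1 : 0 ≤ ((∑ i, a i) + ∑ j, b j) - 2 * H := htA ▸ htAnn
    rw [htB]
    linarith
  have hRnn : 0 ≤ relEnt P Q - ((P - Q).trace).re := le_trans htAnn hK
  have hT2 : T ^ 2 ≤ tA * tB := by
    nlinarith [Real.sq_sqrt htAnn, Real.sq_sqrt htBnn, Real.sqrt_nonneg tA, Real.sqrt_nonneg tB]
  have hfinal : tA * tB ≤ (relEnt P Q - ((P - Q).trace).re) * (4 * m) :=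
    mul_le_mul hK htB4 htBnn hRnn
  linarith [hT2, hfinal]
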